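/- Let L: ℝ^D → ℝ be twice continuously differentiable, let μ ∈ ℝ^D satisfy ∇L(μ) = 0, suppose the Hessian at μ satisfies ∇²L(μ) ⪯ −λ·I_D for some λ > 0, and suppose the Hessian is L₀-Lipschitz around μ in the sense that ‖∇²L(μ + ξ(v−μ)) − ∇²L(μ)‖_op ≤ L₀·ξ·‖v−μ‖ for all v ∈ ℝ^D and ξ ∈ [0,1]. Then for every v ∈ ℝ^D and every η > 0, ‖v − μ‖² + 2η·⟨v − μ, ∇L(v)⟩ ≤ (1 − 2ηλ)·‖v − μ‖² + 2ηL₀·‖v − μ‖³. -/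

import Mathlib

/-!
Statement 17: one-step descent inequality near a strict local maximizer of L
with a Lipschitz Hessian:
‖v−μ‖² + 2η⟨v−μ, ∇L(v)⟩ ≤ (1 − 2ηλ)‖v−μ‖² + 2ηL₀‖v−μ‖³.
-/

open Set
open scoped RealInnerProductSpace

noncomputable section

abbrev EuSp (D : ℕ) := EuclideanSpace ℝ (Fin D)

theorem descent_inequality_near_stationary_point
    (D : ℕ) (L : EuSp D → ℝ) (μ : EuSp D) (lam L₀ : ℝ)
    (hlam : 0 < lam) (hL₀ : 0 < L₀)
    (hC2 : ContDiff ℝ 2 L)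
    (hgrad : gradient L μ = 0)
    (hHess : ∀ w : EuSp D, ⟪w, fderiv ℝ (gradient L) μ w⟫ ≤ -lam * ‖w‖ ^ 2)
    (hLip : ∀ (v : EuSp D) (ξ : ℝ), ξ ∈ Icc (0 : ℝ) 1 →
      ‖fderiv ℝ (gradient L) (μ + ξ • (v - μ)) - fderiv ℝ (gradient L) μ‖ ≤
        L₀ * ξ * ‖v - μ‖)
    (v : EuSp D) (η : ℝ) (hη : 0 < η) :
    ‖v - μ‖ ^ 2 + 2 * η * ⟪v - μ, gradient L v⟫ ≤
      (1 - 2 * η * lam) * ‖v - μ‖ ^ 2 + 2 * η * L₀ * ‖v - μ‖ ^ 3 := by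
  set w : EuSp D := v - μ with hw
  -- gradient L is C¹
  have hG : ContDiff ℝ 1 (gradient L) := by
    have h1 : ContDiff ℝ 1 (fun x => fderiv ℝ L x) :=
      hC2.fderiv_right (by norm_num)
    have : gradient L = fun x =>
        (InnerProductSpace.toDual ℝ (EuSp D)).symm (fderiv ℝ L x) := rfl
    rw [this]
    exact (InnerProductSpace.toDual ℝ (EuSp D)).symm.contDiff.comp h1
  have hGd : Differentiable ℝ (gradient L) := hG.differentiable one_ne_zero
  -- the path g ξ = μ + ξ • w
  set g : ℝ → EuSp D := fun ξ => μ + ξ • w with hg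
  have hgderiv : ∀ ξ : ℝ, HasDerivAt g w ξ := fun ξ => by
    simpa only [id_eq, one_smul] using ((hasDerivAt_id ξ).smul_const w).const_add μ
  -- φ ξ = ⟪w, ∇L (g ξ)⟫
  set φ : ℝ → ℝ := fun ξ => ⟪w, gradient L (g ξ)⟫ with hφ
  have hφderiv : ∀ ξ : ℝ, HasDerivAt φ ⟪w, fderiv ℝ (gradient L) (g ξ) w⟫ ξ := by
    intro ξ
    have h1 : HasDerivAt (fun t => gradient L (g t))
        (fderiv ℝ (gradient L) (g ξ) w) ξ :=
      ((hGd (g ξ)).hasFDerivAt).comp_hasDerivAt ξ (hgderiv ξ)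
    have := (hasDerivAt_const ξ w).inner ℝ h1
    simpa only [inner_zero_left, zero_add, add_zero] using this
  -- bound on φ'
  have hbound : ∀ ξ ∈ Icc (0:ℝ) 1,
      ⟪w, fderiv ℝ (gradient L) (g ξ) w⟫ ≤ -lam * ‖w‖^2 + L₀ * ξ * ‖w‖^3 := by
    intro ξ hξ
    have h1 : ⟪w, fderiv ℝ (gradient L) (g ξ) w⟫
        = ⟪w, fderiv ℝ (gradient L) μ w⟫
          + ⟪w, (fderiv ℝ (gradient L) (g ξ) - fderiv ℝ (gradient L) μ) w⟫ := by
      simp [inner_sub_right]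
    have h2 : ⟪w, (fderiv ℝ (gradient L) (g ξ) - fderiv ℝ (gradient L) μ) w⟫
        ≤ L₀ * ξ * ‖w‖ * ‖w‖^2 := by
      calc ⟪w, (fderiv ℝ (gradient L) (g ξ) - fderiv ℝ (gradient L) μ) w⟫
          ≤ ‖w‖ * ‖(fderiv ℝ (gradient L) (g ξ) - fderiv ℝ (gradient L) μ) w‖ :=
            real_inner_le_norm _ _
        _ ≤ ‖w‖ * (‖fderiv ℝ (gradient L) (g ξ) - fderiv ℝ (gradient L) μ‖ * ‖w‖) :=
            mul_le_mul_of_nonneg_left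
              (ContinuousLinearMap.le_opNorm _ _) (norm_nonneg w)
        _ ≤ ‖w‖ * ((L₀ * ξ * ‖w‖) * ‖w‖) :=
            mul_le_mul_of_nonneg_left
              (mul_le_mul_of_nonneg_right (hLip v ξ hξ) (norm_nonneg w))
              (norm_nonneg w)
        _ = L₀ * ξ * ‖w‖ * ‖w‖^2 := by ring
    have h3 := hHess w
    rw [h1]
    have : L₀ * ξ * ‖w‖ * ‖w‖^2 = L₀ * ξ * ‖w‖^3 := by ring
    linarith [h2, h3, this ▸ h2]
  -- ψ ξ = φ ξ + lam‖w‖² ξ − L₀‖w‖³ ξ²/2 is antitone on [0,1]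
  set ψ : ℝ → ℝ := fun ξ => φ ξ + lam * ‖w‖^2 * ξ - L₀ * ‖w‖^3 * ξ^2 / 2 with hψ
  have hψderiv : ∀ ξ : ℝ, HasDerivAt ψ
      (⟪w, fderiv ℝ (gradient L) (g ξ) w⟫ + lam * ‖w‖^2 - L₀ * ‖w‖^3 * ξ) ξ := by
    intro ξ
    have h1 : HasDerivAt (fun ξ : ℝ => lam * ‖w‖^2 * ξ) (lam * ‖w‖^2) ξ := by
      simpa using (hasDerivAt_id ξ).const_mul (lam * ‖w‖^2)
    have h2 : HasDerivAt (fun ξ : ℝ => L₀ * ‖w‖^3 * ξ^2 / 2) (L₀ * ‖w‖^3 * ξ) ξ := by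
      have := ((hasDerivAt_pow 2 ξ).const_mul (L₀ * ‖w‖^3)).div_const 2
      simpa using this.congr_deriv (by ring)
    exact ((hφderiv ξ).add h1).sub h2
  have hanti : AntitoneOn ψ (Icc 0 1) := by
    apply antitoneOn_of_deriv_nonpos (convex_Icc 0 1)
    · exact fun x _ => ((hψderiv x).continuousAt).continuousWithinAt
    · exact fun x _ => (hψderiv x).differentiableAt.differentiableWithinAt
    · intro x hx
      rw [interior_Icc] at hx
      rw [(hψderiv x).deriv]
      have := hbound x ⟨le_of_lt hx.1, le_of_lt hx.2⟩
      nlinarith [this]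
  have hψ10 : ψ 1 ≤ ψ 0 :=
    hanti (by norm_num) (by norm_num) (by norm_num)
  have hφ0 : φ 0 = 0 := by
    have hg0 : g 0 = μ := by simp [hg]
    show ⟪w, gradient L (g 0)⟫ = 0
    rw [hg0, hgrad, inner_zero_right]
  have hφ1 : φ 1 = ⟪w, gradient L v⟫ := by
    have h1 : g 1 = v := by simp [hg, hw]
    show ⟪w, gradient L (g 1)⟫ = ⟪w, gradient L v⟫
    rw [h1]
  have key : ⟪w, gradient L v⟫ ≤ -lam * ‖w‖^2 + L₀ * ‖w‖^3 / 2 := by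
    have h1 : ψ 1 = φ 1 + lam * ‖w‖^2 - L₀ * ‖w‖^3 / 2 := by
      show φ 1 + lam * ‖w‖^2 * 1 - L₀ * ‖w‖^3 * 1^2 / 2 = _; ring
    have h0 : ψ 0 = 0 := by
      show φ 0 + lam * ‖w‖^2 * 0 - L₀ * ‖w‖^3 * 0^2 / 2 = 0
      rw [hφ0]; ring
    rw [← hφ1]
    clear_value ψ φ
    linarith [hψ10, h1, h0]
  have hwn : (0:ℝ) ≤ ‖w‖^3 := by positivity
  have hk := mul_le_mul_of_nonneg_left key (by positivity : (0:ℝ) ≤ 2 * η)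
  nlinarith [hk, mul_nonneg (mul_nonneg hη.le hL₀.le) hwn]

end
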